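/- Let q > 1 be a real number, 0 < δ < 1, and let p = (p_1, p_2, …) be a real sequence with |p_n| < δ^n/q^n for all n ≥ 1. Then the partial derivative ∂_1 c_1^{(q)}(p) exists and ∂_1 c_1^{(q)}(p) = (1 + q · c_1^{(q)}(p) − q p_1)/(1 + p_1). -/

import Mathlib

/-- `s_1(q) = q + 1` and `s_n(q) = ∑_{d ∣ n} μ(n/d) q^d` for `n ≠ 1`.
(For `n = 0` the sum over divisors is empty, so `sFun q 0 = 0`.) -/
noncomputable def sFun (q : ℝ) (n : ℕ) : ℝ :=
  if n = 1 then q + 1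
  else ∑ d ∈ n.divisors, (ArithmeticFunction.moebius (n / d) : ℝ) * q ^ d

/-- `M_n(q) = (1/n) ∑_{d ∣ n} μ(n/d) q^d`; so `M_1(q) = q` and `M_n(q) = s_n(q)/n` for `n ≥ 2`. -/
noncomputable def MFun (q : ℝ) (n : ℕ) : ℝ :=
  (1 / (n : ℝ)) * ∑ d ∈ n.divisors, (ArithmeticFunction.moebius (n / d) : ℝ) * q ^ d

/-- `H_q(p) = ∏_{n ≥ 1} (1 + p_n)^{M_n(q)}`, a product of real powers (`Real.rpow`).
The `n = 0` factor is `(1 + p 0) ^ (0 : ℝ) = 1`, so the product effectively runs over `n ≥ 1`. -/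
noncomputable def Hfun (q : ℝ) (p : ℕ → ℝ) : ℝ :=
  ∏' n : ℕ, (1 + p n) ^ (MFun q n)

/-- `c_1^{(q)}(p) = q·p_1/(q − 1) − (H_q(p) − 1)/(q(q − 1))`. -/
noncomputable def c1Fun (q : ℝ) (p : ℕ → ℝ) : ℝ :=
  q * p 1 / (q - 1) - (Hfun q p - 1) / (q * (q - 1))

lemma MFun_zero (q : ℝ) : MFun q 0 = 0 := by simp [MFun]

lemma MFun_one (q : ℝ) : MFun q 1 = q := by simp [MFun]

lemma abs_MFun_le {q : ℝ} (hq : 1 ≤ q) {n : ℕ} (hn : 1 ≤ n) : |MFun q n| ≤ q ^ n := by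
  have hn0 : (0:ℝ) < n := by exact_mod_cast hn
  have h1 : |∑ d ∈ n.divisors, (ArithmeticFunction.moebius (n / d) : ℝ) * q ^ d|
      ≤ ∑ d ∈ n.divisors, q ^ n := by
    refine (Finset.abs_sum_le_sum_abs _ _).trans (Finset.sum_le_sum ?_)
    intro d hd
    have hd' : d ≤ n := Nat.le_of_dvd (by omega) (Nat.dvd_of_mem_divisors hd)
    have : |(ArithmeticFunction.moebius (n / d) : ℝ)| ≤ 1 := by
      have := ArithmeticFunction.abs_moebius_le_one (n := n / d)
      exact_mod_cast (by exact_mod_cast this : (|ArithmeticFunction.moebius (n/d)| : ℝ) ≤ 1)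
    calc |(ArithmeticFunction.moebius (n / d) : ℝ) * q ^ d|
        = |(ArithmeticFunction.moebius (n / d) : ℝ)| * |q ^ d| := abs_mul _ _
      _ ≤ 1 * q ^ n := by
          apply mul_le_mul this ?_ (abs_nonneg _) zero_le_one
          rw [abs_of_nonneg (by positivity)]
          exact pow_le_pow_right₀ hq hd'
      _ = q ^ n := one_mul _
  have hcard : ((n.divisors).card : ℝ) ≤ n := by
    have : n.divisors ⊆ Finset.Icc 1 n := by
      intro d hd
      simp only [Finset.mem_Icc]
      exact ⟨Nat.pos_of_mem_divisors hd, Nat.le_of_dvd (by omega) (Nat.dvd_of_mem_divisors hd)⟩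
    have := Finset.card_le_card this
    simp [Nat.card_Icc] at this
    exact_mod_cast this
  calc |MFun q n| = (1 / (n:ℝ)) * |∑ d ∈ n.divisors, (ArithmeticFunction.moebius (n / d) : ℝ) * q ^ d| := by
        rw [MFun, abs_mul, abs_of_nonneg (by positivity)]
    _ ≤ (1 / (n:ℝ)) * ((n.divisors).card * q ^ n) := by
        apply mul_le_mul_of_nonneg_left _ (by positivity)
        simpa using h1
    _ ≤ (1 / (n:ℝ)) * ((n:ℝ) * q ^ n) := by
        apply mul_le_mul_of_nonneg_left _ (by positivity)
        exact mul_le_mul_of_nonneg_right hcard (by positivity)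
    _ = q ^ n := by field_simp

lemma abs_log_one_add_le {x : ℝ} (hx : |x| < 1) :
    |Real.log (1 + x)| ≤ |x| / (1 - |x|) := by
  have h0 : 0 < 1 + x := by cases abs_lt.mp hx; linarith
  have h1 : 0 < 1 - |x| := by linarith
  rw [abs_le]
  constructor
  · have : Real.log (1/(1+x)) ≤ 1/(1+x) - 1 := Real.log_le_sub_one_of_pos (by positivity)
    rw [Real.log_div one_ne_zero (ne_of_gt h0), Real.log_one] at this
    have h2 : 1/(1+x) - 1 = -x/(1+x) := by field_simp; ring
    have h3 : -x/(1+x) ≤ |x|/(1-|x|) := by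
      apply div_le_div₀ (abs_nonneg x) (neg_le_abs x) h1
      cases abs_lt.mp hx; linarith [neg_abs_le x]
    nlinarith [this, h2, h3]
  · have : Real.log (1+x) ≤ (1+x) - 1 := Real.log_le_sub_one_of_pos h0
    have h4 : |x| ≤ |x|/(1-|x|) := by
      rw [le_div_iff₀ h1]; nlinarith [abs_nonneg x]
    calc Real.log (1+x) ≤ x := by linarith
      _ ≤ |x| := le_abs_self x
      _ ≤ _ := h4

/-- For `q > 1`, `0 < δ < 1` and `|p_n| < δ^n/q^n` for all `n ≥ 1`, the partial derivative
`∂_1 c_1^{(q)}(p)` (the derivative at `t = p_1` of `t ↦ c_1^{(q)}` of `p` with first entry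
replaced by `t`) exists and equals `(1 + q·c_1^{(q)}(p) − q·p_1)/(1 + p_1)`. -/
theorem deriv_c1_first_variable (q δ : ℝ) (hq : 1 < q) (hδ0 : 0 < δ) (hδ1 : δ < 1)
    (p : ℕ → ℝ) (hp : ∀ n : ℕ, 1 ≤ n → |p n| < δ ^ n / q ^ n) :
    ∃ D : ℝ,
      HasDerivAt (fun t : ℝ => c1Fun q (Function.update p 1 t)) D (p 1) ∧
      D = (1 + q * c1Fun q p - q * p 1) / (1 + p 1) := by
  have hq0 : (0:ℝ) < q := by linarith
  have hq1 : (0:ℝ) < q - 1 := by linarith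
  set r : ℝ := δ / q with hr_def
  have hr0 : 0 < r := by positivity
  have hr1 : r < 1 := by rw [hr_def, div_lt_one hq0]; linarith
  have hb : ∀ n, 1 ≤ n → |p n| ≤ r ^ n := by
    intro n hn
    have h1 : r ^ n = δ ^ n / q ^ n := div_pow δ q n
    have := hp n hn
    linarith
  have hblt : ∀ n, 1 ≤ n → |p n| < 1 := by
    intro n hn
    exact lt_of_le_of_lt (hb n hn) (pow_lt_one₀ hr0.le hr1 (by omega))
  have hpos : ∀ n, 1 ≤ n → 0 < 1 + p n := by
    intro n hn
    have := (abs_lt.mp (hblt n hn)).1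
    linarith
  set g : ℕ → ℝ := fun n => MFun q n * Real.log (1 + p n) with hg_def
  have hgsum : Summable g := by
    rw [← summable_abs_iff]
    refine Summable.of_nonneg_of_le (f := fun n => (1/(1-r)) * δ ^ n)
      (fun n => abs_nonneg _) ?_ ?_
    · intro n
      rcases Nat.eq_zero_or_pos n with h0 | h1
      · subst h0
        simp only [hg_def, MFun_zero, zero_mul, abs_zero, pow_zero, mul_one]
        exact div_nonneg zero_le_one (by linarith)
      · have hpr : |p n| ≤ r := le_trans (hb n h1) (by simpa using pow_le_pow_of_le_one hr0.le hr1.le h1)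
        calc |g n| = |MFun q n| * |Real.log (1 + p n)| := abs_mul _ _
          _ ≤ q ^ n * (|p n| / (1 - |p n|)) :=
              mul_le_mul (abs_MFun_le hq.le h1) (abs_log_one_add_le (hblt n h1))
                (abs_nonneg _) (by positivity)
          _ ≤ q ^ n * (r ^ n / (1 - r)) := by
              apply mul_le_mul_of_nonneg_left _ (by positivity)
              exact div_le_div₀ (by positivity) (hb n h1) (by linarith) (by linarith)
          _ = (1/(1-r)) * δ ^ n := by
              have hqr : q * r = δ := by rw [hr_def]; field_simp
              rw [div_eq_mul_inv, ← mul_assoc, ← mul_pow, hqr]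
              ring
    · exact (summable_geometric_of_lt_one hδ0.le hδ1).mul_left _
  classical
  set S : ℝ := ∑' n, if n = 1 then 0 else g n with hS_def
  have key : ∀ t : ℝ, 0 < 1 + t →
      Hfun q (Function.update p 1 t) = Real.exp (q * Real.log (1 + t)) * Real.exp S := by
    intro t ht
    have hgt : Summable (Function.update g 1 (q * Real.log (1 + t))) := hgsum.update 1 _
    have hprod : HasProd (fun n => Real.exp (Function.update g 1 (q * Real.log (1 + t)) n))
        (Real.exp (∑' n, Function.update g 1 (q * Real.log (1 + t)) n)) := hgt.hasSum.rexp
    have heq : (fun n : ℕ => (1 + Function.update p 1 t n) ^ (MFun q n))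
        = fun n => Real.exp (Function.update g 1 (q * Real.log (1 + t)) n) := by
      funext n
      rcases eq_or_ne n 1 with rfl | hn
      · rw [Function.update_self, Function.update_self, MFun_one,
          Real.rpow_def_of_pos ht, mul_comm]
      · rw [Function.update_of_ne hn, Function.update_of_ne hn]
        rcases Nat.eq_zero_or_pos n with rfl | h1
        · simp [MFun_zero, hg_def]
        · rw [Real.rpow_def_of_pos (hpos n h1), hg_def, mul_comm]
    have htp : Hfun q (Function.update p 1 t)
        = Real.exp (∑' n, Function.update g 1 (q * Real.log (1 + t)) n) := by
      rw [Hfun, heq]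
      exact hprod.tprod_eq
    rw [htp, Summable.tsum_eq_add_tsum_ite hgt 1, Function.update_self, Real.exp_add]
    congr 2
    rw [hS_def]
    congr 1
    funext n
    rcases eq_or_ne n 1 with rfl | hn
    · simp
    · simp [hn, Function.update_of_ne hn]
  have hpos1 : 0 < 1 + p 1 := hpos 1 le_rfl
  have hne : (1 + p 1) ≠ 0 := ne_of_gt hpos1
  have hHp : Hfun q p = Real.exp (q * Real.log (1 + p 1)) * Real.exp S := by
    have := key (p 1) hpos1
    rwa [Function.update_eq_self] at this
  set E : ℝ := Real.exp S with hE_def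
  have hlog : HasDerivAt (fun t : ℝ => Real.log (1 + t)) (1/(1+p 1)) (p 1) := by
    have h1 : HasDerivAt (fun t : ℝ => 1 + t) 1 (p 1) := (hasDerivAt_id _).const_add 1
    simpa using h1.log hne
  have hexp : HasDerivAt (fun t : ℝ => Real.exp (q * Real.log (1 + t)))
      (Real.exp (q * Real.log (1 + p 1)) * (q * (1/(1+p 1)))) (p 1) :=
    (hlog.const_mul q).exp
  have hF : HasDerivAt
      (fun t : ℝ => q * t / (q-1) - (Real.exp (q * Real.log (1 + t)) * E - 1)/(q*(q-1)))
      (q / (q-1) - (Real.exp (q * Real.log (1 + p 1)) * (q * (1/(1+p 1))) * E)/(q*(q-1)))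
      (p 1) := by
    have h1 : HasDerivAt (fun t : ℝ => q * t / (q-1)) (q/(q-1)) (p 1) := by
      simpa using ((hasDerivAt_id (p 1)).const_mul q).div_const (q-1)
    exact h1.sub (((hexp.mul_const E).sub_const 1).div_const (q*(q-1)))
  have hev : ∀ᶠ t in nhds (p 1), 0 < 1 + t := by
    have h1 : (-1 : ℝ) < p 1 := by linarith
    filter_upwards [eventually_gt_nhds h1] with t ht
    linarith
  have hcongr : (fun t : ℝ => c1Fun q (Function.update p 1 t))
      =ᶠ[nhds (p 1)]
      (fun t : ℝ => q * t / (q-1) - (Real.exp (q * Real.log (1 + t)) * E - 1)/(q*(q-1))) := by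
    filter_upwards [hev] with t ht
    rw [c1Fun, key t ht, Function.update_self]
  refine ⟨_, hF.congr_of_eventuallyEq hcongr, ?_⟩
  have hA : Real.exp (q * Real.log (1 + p 1)) * (q * (1/(1+p 1))) * E
      = Hfun q p * q / (1 + p 1) := by
    rw [hHp]; ring
  rw [hA, c1Fun]
  field_simp
  ring
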